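/- Let F = FreeGroup (Fin 2) and let R = F / K, where K is the normal subgroup of F generated by the third term of the lower central series of F together with all cubes of elements of F (so R = F_2(𝔑_{2,3})). Then var(R ≀ C_2) ≠ 𝔑_{2,3} 𝔄_2: there exists a group G having a normal subgroup N with N nilpotent of class at most 2 and exponent dividing 3 and G/N abelian of exponent dividing 2, such that some law of R ≀ C_2 is not a law of G. -/

import Mathlib

/-- A word `w` in the free group on `k` generators is a law of the group `H`
if every homomorphism from the free group to `H` sends `w` to `1`. -/
def IsGroupLaw (H : Type*) [Group H] {k : ℕ} (w : FreeGroup (Fin k)) : Prop :=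
  ∀ φ : FreeGroup (Fin k) →* H, φ w = 1

/-- `G` lies in the variety generated by `H`: every law of `H` is a law of `G`. -/
def InVariety (G : Type*) [Group G] (H : Type*) [Group H] : Prop :=
  ∀ (k : ℕ) (w : FreeGroup (Fin k)), IsGroupLaw H w → IsGroupLaw G w

/-- The shifting action of `B` on the Cartesian power `B → A`:
`(b • f) x = f (b⁻¹ * x)`. -/
def wreathShift (A B : Type*) [Group A] [Group B] : B →* MulAut (B → A) where
  toFun b :=
    { toFun := fun f x => f (b⁻¹ * x)
      invFun := fun f x => f (b * x)
      left_inv := fun f => by funext x; simp [mul_assoc]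
      right_inv := fun f => by funext x; simp [mul_assoc]
      map_mul' := fun f g => rfl }
  map_one' := by ext f x; simp
  map_mul' b₁ b₂ := by ext f x; simp [mul_assoc]

/-- The (standard, Cartesian) wreath product `A ≀ B = (B → A) ⋊ B`. -/
abbrev WreathProduct (A B : Type*) [Group A] [Group B] : Type _ :=
  SemidirectProduct (B → A) B (wreathShift A B)

open scoped commutatorElement

abbrev C2 := Multiplicative (ZMod 2)

lemma C2.cases : ∀ u : C2, u = 1 ∨ u = Multiplicative.ofAdd 1 := by decide
lemma C2.mul_self : ∀ u : C2, u * u = 1 := by decide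
lemma C2.inv_eq : ∀ u : C2, u⁻¹ = u := by decide
lemma C2.comm : ∀ u v : C2, u * v * u⁻¹ * v⁻¹ = 1 := by decide

section BaseLemmas
variable {A B : Type*} [Group A] [Group B]
local notation "WAB" => WreathProduct A B

lemma comm_right_one (hB : ∀ u v : B, u * v * u⁻¹ * v⁻¹ = 1) (u v : WAB) :
    (⁅u, v⁆).right = 1 := by
  show u.right * v.right * u.right⁻¹ * v.right⁻¹ = 1
  exact hB _ _

lemma commute_of_base (u v : WAB) (hu : u.right = 1) (hv : v.right = 1)
    (h : ∀ z, Commute (u.left z) (v.left z)) : Commute u v := by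
  show u * v = v * u
  apply SemidirectProduct.ext
  · show u.left * wreathShift A B u.right v.left = v.left * wreathShift A B v.right u.left
    rw [hu, hv, map_one]
    funext z
    exact h z
  · show u.right * v.right = v.right * u.right
    rw [hu, hv]

lemma base_comm_left (u v : WAB) (hu : u.right = 1) (hv : v.right = 1) (z : B) :
    (⁅u, v⁆).left z = ⁅u.left z, v.left z⁆ := by
  show (u * v * u⁻¹ * v⁻¹).left z = _
  simp only [SemidirectProduct.mul_left, SemidirectProduct.inv_left,
    SemidirectProduct.mul_right, SemidirectProduct.inv_right, hu, hv, one_mul, mul_one,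
    inv_one, map_one, MulAut.one_apply]
  rfl
end BaseLemmas

section LawW
variable {A : Type*} [Group A]
local notation "W" => WreathProduct A C2

lemma wshift_apply (r : C2) (h : C2 → A) (z : C2) :
    (wreathShift A C2 r h) z = h (r * z) := by
  show h (r⁻¹ * z) = h (r * z)
  rw [C2.inv_eq]
end LawW

section Law2
variable {A : Type*} [Group A]
local notation "W" => WreathProduct A C2

@[simp] lemma C2.osq : Multiplicative.ofAdd (1 : ZMod 2) * Multiplicative.ofAdd 1 = 1 := by decide
@[simp] lemma C2.oinv : (Multiplicative.ofAdd (1 : ZMod 2))⁻¹ = Multiplicative.ofAdd 1 := by decide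
@[simp] lemma C2.oo (z : C2) :
    Multiplicative.ofAdd (1 : ZMod 2) * (Multiplicative.ofAdd 1 * z) = z := by
  rw [← mul_assoc, C2.osq, one_mul]

lemma law_main (h2 : ∀ a b c : A, ⁅⁅a, b⁆, c⁆ = 1) (x y : W) :
    ⁅⁅y * y, x⁆, ⁅y, x⁆⁆ = 1 := by
  have hVr : (⁅y, x⁆).right = 1 := comm_right_one C2.comm y x
  rw [commutatorElement_eq_one_iff_commute]
  have hyy : (y * y).right = 1 := by
    show y.right * y.right = 1; exact C2.mul_self _
  rcases C2.cases y.right with ht | ht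
  · -- y in base
    have hU : ⁅y * y, x⁆ = ⁅y, ⁅y, x⁆⁆ * ⁅y, x⁆ * ⁅y, x⁆ := by
      simp only [commutatorElement_def]; group
    rw [hU]
    have h1 : Commute ⁅y, ⁅y, x⁆⁆ ⁅y, x⁆ := by
      apply commute_of_base _ _ (comm_right_one C2.comm _ _) hVr
      intro z
      rw [base_comm_left y ⁅y, x⁆ ht hVr]
      exact commutatorElement_eq_one_iff_commute.mp (h2 _ _ _)
    exact (h1.mul_left (Commute.refl _)).mul_left (Commute.refl _)
  · rcases C2.cases x.right with hs | hs
    · -- x in base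
      apply commute_of_base _ _ (comm_right_one C2.comm _ _) hVr
      intro z
      rw [base_comm_left _ _ hyy hs]
      exact commutatorElement_eq_one_iff_commute.mp (h2 _ _ _)
    · -- both tops nontrivial
      apply commute_of_base _ _ (comm_right_one C2.comm _ _) hVr
      intro z
      have hUleft : (⁅y * y, x⁆).left z =
          y.left z * y.left (Multiplicative.ofAdd 1 * z) * x.left z * (y.left z)⁻¹ *
            (y.left (Multiplicative.ofAdd 1 * z))⁻¹ * (x.left z)⁻¹ := by
        show ((y * y) * x * (y * y)⁻¹ * x⁻¹).left z = _
        simp only [SemidirectProduct.mul_left, SemidirectProduct.inv_left,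
          SemidirectProduct.mul_right, SemidirectProduct.inv_right, wshift_apply,
          Pi.mul_apply, Pi.inv_apply, ht, hs, C2.osq, C2.oinv, C2.oo, one_mul, mul_one,
          inv_one, map_one, MulAut.one_apply, mul_inv_rev, mul_assoc]
      have hsplit : y.left z * y.left (Multiplicative.ofAdd 1 * z) * x.left z *
            (y.left z)⁻¹ * (y.left (Multiplicative.ofAdd 1 * z))⁻¹ * (x.left z)⁻¹ =
          ⁅y.left z, y.left (Multiplicative.ofAdd 1 * z)⁆ *
            ⁅y.left (Multiplicative.ofAdd 1 * z) * y.left z, x.left z⁆ := by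
        simp only [commutatorElement_def]; group
      rw [hUleft, hsplit]
      exact Commute.mul_left (commutatorElement_eq_one_iff_commute.mp (h2 _ _ _))
        (commutatorElement_eq_one_iff_commute.mp (h2 _ _ _))
end Law2

section Rside
abbrev F2 := FreeGroup (Fin 2)
abbrev Kclos : Subgroup F2 := Subgroup.normalClosure
  ((Subgroup.lowerCentralSeries (⊤ : Subgroup F2) 2 : Set F2) ∪ Set.range (fun x : F2 => x ^ 3))
abbrev Rgrp := F2 ⧸ Kclos

lemma lcs_succ_comm (G : Type*) [Group G] (n : ℕ) :
    Subgroup.lowerCentralSeries (⊤ : Subgroup G) (n + 1) =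
      ⁅Subgroup.lowerCentralSeries (⊤ : Subgroup G) n, (⊤ : Subgroup G)⁆ := rfl

lemma R_cube (a : Rgrp) : a ^ 3 = 1 := by
  obtain ⟨p, rfl⟩ := QuotientGroup.mk_surjective a
  have h : ((p : Rgrp)) ^ 3 = ((p ^ 3 : F2) : Rgrp) := by
    rw [← QuotientGroup.mk'_apply, ← map_pow, QuotientGroup.mk'_apply]
  rw [h, QuotientGroup.eq_one_iff]
  exact Subgroup.subset_normalClosure (Set.mem_union_right _ ⟨p, rfl⟩)

lemma R_class2 (a b c : Rgrp) : ⁅⁅a, b⁆, c⁆ = 1 := by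
  obtain ⟨p, rfl⟩ := QuotientGroup.mk_surjective a
  obtain ⟨q, rfl⟩ := QuotientGroup.mk_surjective b
  obtain ⟨r, rfl⟩ := QuotientGroup.mk_surjective c
  have h : ⁅⁅(p : Rgrp), (q : Rgrp)⁆, (r : Rgrp)⁆ = ((⁅⁅p, q⁆, r⁆ : F2) : Rgrp) := by
    simp only [← QuotientGroup.mk'_apply, ← map_commutatorElement]
  rw [h, QuotientGroup.eq_one_iff]
  apply Subgroup.subset_normalClosure
  apply Set.mem_union_left
  apply SetLike.mem_coe.mpr
  have h1 : ⁅p, q⁆ ∈ Subgroup.lowerCentralSeries (⊤ : Subgroup F2) 1 := by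
    rw [lcs_succ_comm]
    exact Subgroup.commutator_mem_commutator
      (by rw [Subgroup.lowerCentralSeries_zero]; trivial) (Subgroup.mem_top q)
  show ⁅⁅p, q⁆, r⁆ ∈ Subgroup.lowerCentralSeries (⊤ : Subgroup F2) (1 + 1)
  rw [lcs_succ_comm]
  exact Subgroup.commutator_mem_commutator h1 (Subgroup.mem_top r)
end Rside

@[ext] structure Heis where
  a : ZMod 3
  b : ZMod 3
  c : ZMod 3
deriving DecidableEq

instance : Mul Heis := ⟨fun p q => ⟨p.a + q.a, p.b + q.b, p.c + q.c + p.a * q.b⟩⟩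
instance : One Heis := ⟨⟨0, 0, 0⟩⟩
instance : Inv Heis := ⟨fun p => ⟨-p.a, -p.b, -p.c + p.a * p.b⟩⟩

@[simp] lemma Heis.mul_a (p q : Heis) : (p * q).a = p.a + q.a := rfl
@[simp] lemma Heis.mul_b (p q : Heis) : (p * q).b = p.b + q.b := rfl
@[simp] lemma Heis.mul_c (p q : Heis) : (p * q).c = p.c + q.c + p.a * q.b := rfl
@[simp] lemma Heis.one_a : (1 : Heis).a = 0 := rfl
@[simp] lemma Heis.one_b : (1 : Heis).b = 0 := rfl
@[simp] lemma Heis.one_c : (1 : Heis).c = 0 := rfl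
@[simp] lemma Heis.inv_a (p : Heis) : p⁻¹.a = -p.a := rfl
@[simp] lemma Heis.inv_b (p : Heis) : p⁻¹.b = -p.b := rfl
@[simp] lemma Heis.inv_c (p : Heis) : p⁻¹.c = -p.c + p.a * p.b := rfl

instance : Group Heis where
  mul_assoc p q r := by ext <;> simp <;> ring
  one_mul p := by ext <;> simp
  mul_one p := by ext <;> simp
  inv_mul_cancel p := by ext <;> simp

lemma heis_cube (p : Heis) : p ^ 3 = 1 := by
  have h3 : (3 : ZMod 3) = 0 := rfl
  have key : ∀ x : ZMod 3, x + x + x = 0 := by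
    intro x; linear_combination x * h3
  have : p ^ 3 = p * p * p := by rw [pow_succ, pow_two]
  rw [this]; ext <;> simp
  · exact key p.a
  · exact key p.b
  · linear_combination (p.c + p.a * p.b) * h3

lemma heis_class2 (p q r : Heis) : ⁅⁅p, q⁆, r⁆ = 1 := by
  simp only [commutatorElement_def]
  ext <;> simp <;> ring

section Gside
abbrev K4 := C2 × C2
abbrev Gc := WreathProduct Heis K4

abbrev Nsub : Subgroup Gc := MonoidHom.ker (SemidirectProduct.rightHom)

lemma Nsub_right {u : Gc} (hu : u ∈ Nsub) : u.right = 1 := hu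

lemma Nsub_cube (g : ↥Nsub) : g ^ 3 = 1 := by
  apply Subtype.ext
  rw [SubgroupClass.coe_pow, OneMemClass.coe_one]
  have hu : (g : Gc).right = 1 := Nsub_right g.2
  have h3 : (g : Gc) ^ 3 = (g : Gc) * (g : Gc) * (g : Gc) := by
    rw [pow_succ, pow_two]
  rw [h3]
  apply SemidirectProduct.ext
  · simp only [SemidirectProduct.mul_left, SemidirectProduct.one_left, hu, map_one,
      MulAut.one_apply, SemidirectProduct.mul_right, mul_one]
    funext z
    have := heis_cube ((g : Gc).left z)
    rw [pow_succ, pow_two] at this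
    exact this
  · simp only [SemidirectProduct.mul_right, SemidirectProduct.one_right, hu, mul_one]

lemma Nsub_class2 (a b c : ↥Nsub) : ⁅⁅a, b⁆, c⁆ = 1 := by
  apply Subtype.ext
  have hcoe : ∀ u v : ↥Nsub, ((⁅u, v⁆ : ↥Nsub) : Gc) = ⁅(u : Gc), (v : Gc)⁆ := by
    intro u v; simp [commutatorElement_def]
  rw [hcoe, hcoe, OneMemClass.coe_one]
  have h1 : (⁅(a : Gc), (b : Gc)⁆).right = 1 := comm_right_one (by decide) _ _
  rw [commutatorElement_eq_one_iff_commute]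
  apply commute_of_base _ _ h1 (Nsub_right c.2)
  intro z
  rw [base_comm_left _ _ (Nsub_right a.2) (Nsub_right b.2)]
  exact commutatorElement_eq_one_iff_commute.mp (heis_class2 _ _ _)

lemma Nsub_lcs2 : Subgroup.lowerCentralSeries (⊤ : Subgroup ↥Nsub) 2 = ⊥ := by
  apply Subgroup.lowerCentralSeries_succ_eq_bot
  rw [Subgroup.top_lowerCentralSeries_one, commutator_def]
  rw [Subgroup.commutator_le]
  intro g₁ _ g₂ _
  rw [Subgroup.mem_center_iff]
  intro c
  exact (commutatorElement_eq_one_iff_commute.mp (Nsub_class2 g₁ g₂ c)).symm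
end Gside

section Quotside
lemma Q_comm (x y : Gc ⧸ Nsub) : x * y = y * x := by
  obtain ⟨a, rfl⟩ := QuotientGroup.mk_surjective x
  obtain ⟨b, rfl⟩ := QuotientGroup.mk_surjective y
  rw [← QuotientGroup.mk_mul, ← QuotientGroup.mk_mul, QuotientGroup.eq]
  show SemidirectProduct.rightHom ((a * b)⁻¹ * (b * a)) = 1
  rw [map_mul, map_inv, map_mul, map_mul]
  exact (by decide : ∀ u v : K4, (u * v)⁻¹ * (v * u) = 1) _ _

lemma Q_sq (g : Gc ⧸ Nsub) : g ^ 2 = 1 := by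
  obtain ⟨a, rfl⟩ := QuotientGroup.mk_surjective g
  have h : ((a : Gc ⧸ Nsub)) ^ 2 = ((a ^ 2 : Gc) : Gc ⧸ Nsub) := by
    rw [← QuotientGroup.mk'_apply, ← map_pow, QuotientGroup.mk'_apply]
  rw [h, QuotientGroup.eq_one_iff]
  show SemidirectProduct.rightHom (a ^ 2) = 1
  rw [map_pow]
  exact (by decide : ∀ u : K4, u ^ 2 = 1) _
end Quotside

def wWord : FreeGroup (Fin 2) :=
  ⁅⁅FreeGroup.of (1 : Fin 2) * FreeGroup.of (1 : Fin 2), FreeGroup.of (0 : Fin 2)⁆,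
    ⁅FreeGroup.of (1 : Fin 2), FreeGroup.of (0 : Fin 2)⁆⁆

lemma law_R : ∀ φ : FreeGroup (Fin 2) →* WreathProduct Rgrp C2, φ wWord = 1 := by
  intro φ
  unfold wWord
  rw [map_commutatorElement, map_commutatorElement, map_commutatorElement, map_mul]
  exact law_main R_class2 (φ (FreeGroup.of 0)) (φ (FreeGroup.of 1))

instance : DecidableEq Gc := fun u v =>
  decidable_of_iff (u.left = v.left ∧ u.right = v.right)
    (by cases u; cases v; exact SemidirectProduct.ext_iff.symm)

def Xg : Gc := ⟨fun z => if z = 1 then ⟨1, 0, 0⟩ else 1, (Multiplicative.ofAdd 1, 1)⟩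
def Yg : Gc := ⟨fun z => if z = 1 then ⟨0, 1, 0⟩ else 1, (1, Multiplicative.ofAdd 1)⟩

set_option maxHeartbeats 1000000 in
lemma wval : ⁅⁅Yg * Yg, Xg⁆, ⁅Yg, Xg⁆⁆ ≠ 1 := by decide

lemma notlaw : ¬ ∀ φ : FreeGroup (Fin 2) →* Gc, φ wWord = 1 := by
  intro h
  have hv := h (FreeGroup.lift ![Xg, Yg])
  unfold wWord at hv
  rw [map_commutatorElement, map_commutatorElement, map_commutatorElement,
    map_mul, FreeGroup.lift_apply_of, FreeGroup.lift_apply_of] at hv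
  simp only [Matrix.cons_val_one, Matrix.head_cons, Matrix.cons_val_zero] at hv
  exact wval hv


theorem free_nilpotent_23_wreath_C2_not_generating :
    ∃ (G : Type) (hG : Group G), letI := hG;
      (∃ (N : Subgroup G) (hN : N.Normal),
        (Subgroup.lowerCentralSeries (⊤ : Subgroup N) 2 = ⊥ ∧ ∀ g : N, g ^ 3 = 1) ∧
        (letI := hN;
          (∀ x y : G ⧸ N, x * y = y * x) ∧ ∀ g : G ⧸ N, g ^ 2 = 1)) ∧
      ∃ (k : ℕ) (w : FreeGroup (Fin k)),
        IsGroupLaw (WreathProduct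
          (FreeGroup (Fin 2) ⧸ Subgroup.normalClosure
            ((Subgroup.lowerCentralSeries (⊤ : Subgroup (FreeGroup (Fin 2))) 2 : Set (FreeGroup (Fin 2))) ∪
              Set.range (fun x : FreeGroup (Fin 2) => x ^ 3)))
          (Multiplicative (ZMod 2))) w ∧
        ¬ IsGroupLaw G w := by
  refine ⟨Gc, inferInstance, ⟨Nsub, MonoidHom.normal_ker _, ⟨Nsub_lcs2, Nsub_cube⟩,
    Q_comm, Q_sq⟩, 2, wWord, law_R, notlaw⟩
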